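/- arXiv:2109.01194 — 10 statements merged into one kernel-verified Lean document; each statement's English description precedes it below -/
import Mathlib

section
/- For odd n ≥ 1, the chromatic number of the cyclic Latin square graph T_n equals n. -/
/-- The cyclic Latin square graph of order `n`. -/
def cyclicLatinSquareGraph (n : ℕ) : SimpleGraph (ZMod n × ZMod n) :=
  SimpleGraph.fromRel (fun x y => x.1 = y.1 ∨ x.2 = y.2 ∨ x.1 + x.2 = y.1 + y.2)

theorem cyclic_chromaticNumber_odd (n : ℕ) (hn : 1 ≤ n) (hodd : Odd n) :
    (cyclicLatinSquareGraph n).chromaticNumber = n := by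
  haveI : NeZero n := ⟨by omega⟩
  have hcop : IsUnit (2 : ZMod n) := by
    have : Nat.Coprime 2 n := by
      rw [Nat.coprime_two_left]; exact hodd
    have := (ZMod.isUnit_iff_coprime 2 n).mpr (by exact_mod_cast this)
    simpa using this
  obtain ⟨v, hv⟩ : ∃ v : ZMod n, v * 2 = 1 := by
    obtain ⟨u, hu⟩ := hcop
    exact ⟨(u⁻¹ : (ZMod n)ˣ), by rw [← hu]; simp⟩
  have key : ∀ x y : ZMod n × ZMod n,
      (x.1 = y.1 ∨ x.2 = y.2 ∨ x.1 + x.2 = y.1 + y.2) →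
      x.1 - x.2 = y.1 - y.2 → x = y := by
    rintro x y (h1 | h2 | h3) hc
    · exact Prod.ext h1 (by linear_combination h1 - hc)
    · exact Prod.ext (by linear_combination h2 + hc) h2
    · have hx1 : x.1 = y.1 := by
        linear_combination v * h3 + v * hc - (x.1 - y.1) * hv
      exact Prod.ext hx1 (by linear_combination h3 - hx1)
  -- Coloring : color (i,j) ↦ i - j
  have C : (cyclicLatinSquareGraph n).Coloring (ZMod n) := by
    refine SimpleGraph.Coloring.mk (fun x => x.1 - x.2) ?_
    intro x y hadj hc
    rcases hadj with ⟨hne, h | h⟩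
    · exact hne (key x y h hc)
    · exact hne ((key y x h hc.symm).symm)
  have hcol : (cyclicLatinSquareGraph n).Colorable n := by
    have := C.colorable
    rwa [ZMod.card] at this
  -- Lower bound: the row {(0, j)} is a clique of size n.
  have emb : (⊤ : SimpleGraph (ZMod n)) ↪g cyclicLatinSquareGraph n := by
    refine ⟨⟨fun j => (0, j), fun a b hab => (Prod.mk.injEq _ _ _ _ ▸ hab).2⟩, ?_⟩
    intro a b
    simp only [SimpleGraph.top_adj, cyclicLatinSquareGraph, SimpleGraph.fromRel_adj]
    constructor
    · rintro ⟨hne, _⟩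
      intro h; apply hne; rw [h]
    · intro hne
      exact ⟨fun h => hne (by simpa using h), Or.inl (Or.inl rfl)⟩
  have hlow : (n : ℕ∞) ≤ (cyclicLatinSquareGraph n).chromaticNumber := by
    have := SimpleGraph.chromaticNumber_mono_of_hom emb.toHom
    rwa [SimpleGraph.chromaticNumber_top, ZMod.card] at this
  exact le_antisymm hcol.chromaticNumber_le hlow
end

section
/- For even n ≥ 2, the cyclic Latin square graph T_n admits no proper coloring with n colors; that is, its chromatic number is at least n + 1. -/
lemma zmod_sum_univ (n : ℕ) [NeZero n] :
    (∑ i : ZMod n, i) = ((∑ k ∈ Finset.range n, k : ℕ) : ZMod n) := by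
  rw [Nat.cast_sum]
  apply Finset.sum_nbij' (fun i => (ZMod.val i : ℕ)) (fun k => (k : ZMod n))
  · intro a _; exact Finset.mem_range.mpr (ZMod.val_lt a)
  · intro a _; exact Finset.mem_univ _
  · intro a _; simp [ZMod.natCast_val, ZMod.cast_id]
  · intro a ha; exact ZMod.val_cast_of_lt (Finset.mem_range.mp ha)
  · intro a _; simp [ZMod.natCast_val, ZMod.cast_id]

theorem cyclic_even_not_colorable_n (n : ℕ) (hn : 2 ≤ n) (heven : Even n) :
    ¬ (cyclicLatinSquareGraph n).Colorable n ∧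
      (n + 1 : ℕ∞) ≤ (cyclicLatinSquareGraph n).chromaticNumber := by
  haveI : NeZero n := ⟨by omega⟩
  have key : ¬ (cyclicLatinSquareGraph n).Colorable n := by
    rintro ⟨C⟩
    have hadj : ∀ (x y : ZMod n × ZMod n), x ≠ y →
        (x.1 = y.1 ∨ x.2 = y.2 ∨ x.1 + x.2 = y.1 + y.2) → C x ≠ C y := by
      intro x y hne hrel
      exact C.valid ((SimpleGraph.fromRel_adj _ _ _).mpr ⟨hne, Or.inl hrel⟩)
    -- each row is rainbow
    have hrow : ∀ i : ZMod n, Function.Bijective (fun j : ZMod n => C (i, j)) := by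
      intro i
      rw [Fintype.bijective_iff_injective_and_card]
      refine ⟨?_, by simp [ZMod.card]⟩
      intro j j' h
      by_contra hne
      exact hadj (i, j) (i, j') (by simp [Prod.ext_iff, hne]) (Or.inl rfl) h
    set c : Fin n := C (0, 0) with hc
    set σ : ZMod n → ZMod n := fun i => (Equiv.ofBijective _ (hrow i)).symm c with hσ
    have hCσ : ∀ i, C (i, σ i) = c := fun i =>
      (Equiv.ofBijective _ (hrow i)).apply_symm_apply c
    have hσinj : Function.Injective σ := by
      intro i i' h
      by_contra hne
      exact hadj (i, σ i) (i', σ i') (by simp [Prod.ext_iff, hne])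
        (Or.inr (Or.inl h)) (by rw [hCσ, hCσ])
    have hτinj : Function.Injective (fun i => i + σ i) := by
      intro i i' h
      by_contra hne
      exact hadj (i, σ i) (i', σ i') (by simp [Prod.ext_iff, hne])
        (Or.inr (Or.inr h)) (by rw [hCσ, hCσ])
    -- sums
    have hsum1 : (∑ i : ZMod n, (i + σ i)) = ∑ i : ZMod n, i := by
      have h := Equiv.sum_comp (Equiv.ofBijective _
        (Finite.injective_iff_bijective.mp hτinj)) (id : ZMod n → ZMod n)
      simpa using h
    have hsum2 : (∑ i : ZMod n, σ i) = ∑ i : ZMod n, i := by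
      have h := Equiv.sum_comp (Equiv.ofBijective _
        (Finite.injective_iff_bijective.mp hσinj)) (id : ZMod n → ZMod n)
      simpa using h
    have hS0 : (∑ i : ZMod n, i) = 0 := by
      have := hsum1
      rw [Finset.sum_add_distrib, hsum2] at this
      have h2 : (∑ i : ZMod n, i) + (∑ i : ZMod n, i) = ∑ i : ZMod n, i := this
      linear_combination h2
    -- but the sum is n/2 ≠ 0
    rw [zmod_sum_univ] at hS0
    have hdvd : n ∣ ∑ k ∈ Finset.range n, k :=
      (ZMod.natCast_eq_zero_iff _ _).mp hS0
    obtain ⟨m, hm⟩ := heven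
    have hgauss : (∑ k ∈ Finset.range n, k) * 2 = n * (n - 1) :=
      Finset.sum_range_id_mul_two n
    obtain ⟨k, hk⟩ := hdvd
    have h2k : n * (2 * k) = n * (n - 1) := by rw [← hgauss, hk]; ring
    have := Nat.eq_of_mul_eq_mul_left (show 0 < n by omega) h2k
    omega
  refine ⟨key, ?_⟩
  have h1 : ¬ ((cyclicLatinSquareGraph n).chromaticNumber ≤ n) := by
    rw [SimpleGraph.chromaticNumber_le_iff_colorable]
    exact key
  have h2 : (n : ℕ∞) < (cyclicLatinSquareGraph n).chromaticNumber := lt_of_not_ge h1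
  exact Order.add_one_le_of_lt h2
end

section
/- For even n ≥ 2, the cyclic Latin square graph T_n admits no proper coloring with n + 1 colors; that is, its chromatic number is at least n + 2. -/
lemma sum_zmod_ne_zero (n : ℕ) [NeZero n] (hn : 2 ≤ n) (heven : Even n) :
    ∑ x : ZMod n, x ≠ 0 := by
  obtain ⟨m, rfl⟩ := heven
  have hm : 1 ≤ m := by omega
  have h1 : ∑ x : ZMod (m + m), x = ∑ i ∈ Finset.range (m + m), (i : ZMod (m + m)) := by
    refine Finset.sum_nbij' (fun x => x.val) (fun i => (i : ZMod (m + m))) ?_ ?_ ?_ ?_ ?_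
    · intro a _; exact Finset.mem_range.mpr (ZMod.val_lt a)
    · intro a _; exact Finset.mem_univ _
    · intro a _; exact ZMod.natCast_zmod_val a
    · intro a ha; exact ZMod.val_natCast_of_lt (Finset.mem_range.mp ha)
    · intro a _; exact (ZMod.natCast_zmod_val a).symm
  rw [h1, ← Nat.cast_sum]
  have h2 : ∑ i ∈ Finset.range (m + m), i = m * (m + m - 1) := by
    obtain ⟨k, hk⟩ : ∃ k, m + m - 1 = k := ⟨_, rfl⟩
    have h := Finset.sum_range_id_mul_two (m + m)
    rw [hk]
    have h3 : (∑ i ∈ Finset.range (m + m), i) * 2 = (m * k) * 2 := by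
      rw [h, hk]; ring
    exact Nat.eq_of_mul_eq_mul_right (by norm_num) h3
  rw [h2, Ne, ZMod.natCast_eq_zero_iff]
  rintro ⟨k, hk⟩
  have : m + m - 1 = 2 * k := by
    have h3 : m * (m + m - 1) = m * (2 * k) := by rw [hk]; ring
    exact Nat.eq_of_mul_eq_mul_left (by omega) h3
  omega

theorem cyclic_even_not_colorable_succ (n : ℕ) (hn : 2 ≤ n) (heven : Even n) :
    ¬ (cyclicLatinSquareGraph n).Colorable (n + 1) ∧
      (n + 2 : ℕ∞) ≤ (cyclicLatinSquareGraph n).chromaticNumber := by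
  haveI : NeZero n := ⟨by omega⟩
  have hnc : ¬ (cyclicLatinSquareGraph n).Colorable (n + 1) := by
    rintro ⟨C⟩
    -- pigeonhole: some color class has > n - 1 elements
    have hcard : Fintype.card (Fin (n + 1)) * (n - 1) < Fintype.card (ZMod n × ZMod n) := by
      simp [ZMod.card]
      obtain ⟨k, rfl⟩ : ∃ k, n = k + 2 := ⟨n - 2, by omega⟩
      simp [Nat.add_sub_cancel]
      nlinarith
    obtain ⟨c, hc⟩ := Fintype.exists_lt_card_fiber_of_mul_lt_card (f := C) hcard
    set F : Finset (ZMod n × ZMod n) := Finset.univ.filter (fun x => C x = c) with hF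
    have hne : ∀ x ∈ F, ∀ y ∈ F, x ≠ y →
        ¬(x.1 = y.1 ∨ x.2 = y.2 ∨ x.1 + x.2 = y.1 + y.2) := by
      intro x hx y hy hxy h
      have hadj : (cyclicLatinSquareGraph n).Adj x y := by
        rw [cyclicLatinSquareGraph, SimpleGraph.fromRel_adj]
        exact ⟨hxy, Or.inl h⟩
      have := C.valid hadj
      simp only [hF, Finset.mem_filter] at hx hy
      rw [hx.2, hy.2] at this
      exact this rfl
    -- injectivity of the three projections on F
    have inj1 : ∀ x ∈ F, ∀ y ∈ F, x.1 = y.1 → x = y := by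
      intro x hx y hy h
      by_contra hxy
      exact hne x hx y hy hxy (Or.inl h)
    have inj2 : ∀ x ∈ F, ∀ y ∈ F, x.2 = y.2 → x = y := by
      intro x hx y hy h
      by_contra hxy
      exact hne x hx y hy hxy (Or.inr (Or.inl h))
    have inj3 : ∀ x ∈ F, ∀ y ∈ F, x.1 + x.2 = y.1 + y.2 → x = y := by
      intro x hx y hy h
      by_contra hxy
      exact hne x hx y hy hxy (Or.inr (Or.inr h))
    -- F has card exactly n, and each projection image is all of ZMod n
    have hle : F.card ≤ n := by
      have := Finset.card_image_of_injOn (f := Prod.fst) (s := F)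
        (fun x hx y hy h => inj1 x hx y hy h)
      calc F.card = (F.image Prod.fst).card := this.symm
        _ ≤ Fintype.card (ZMod n) := Finset.card_le_univ _
        _ = n := ZMod.card n
    have hFcard : F.card = n := by omega
    have himg : ∀ (f : ZMod n × ZMod n → ZMod n),
        (∀ x ∈ F, ∀ y ∈ F, f x = f y → x = y) →
        ∑ x ∈ F, f x = ∑ z : ZMod n, z := by
      intro f hinj
      have h1 : (F.image f).card = n := by
        rw [Finset.card_image_of_injOn (fun x hx y hy h => hinj x hx y hy h), hFcard]
      have h2 : F.image f = Finset.univ := by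
        apply Finset.eq_univ_of_card
        rw [h1, ZMod.card]
      rw [← h2, Finset.sum_image hinj]
    have e1 := himg Prod.fst inj1
    have e2 := himg Prod.snd inj2
    have e3 := himg (fun x => x.1 + x.2) inj3
    have : ∑ z : ZMod n, z = 0 := by
      have : ∑ x ∈ F, (x.1 + x.2) = ∑ x ∈ F, x.1 + ∑ x ∈ F, x.2 := Finset.sum_add_distrib
      rw [e3, e1, e2] at this
      exact left_eq_add.mp this
    exact sum_zmod_ne_zero n hn heven this
  refine ⟨hnc, ?_⟩
  have h : ¬ ((cyclicLatinSquareGraph n).chromaticNumber ≤ (n + 1 : ℕ)) := by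
    rwa [SimpleGraph.chromaticNumber_le_iff_colorable]
  have h2 : ((n + 1 : ℕ) : ℕ∞) < (cyclicLatinSquareGraph n).chromaticNumber := lt_of_not_ge h
  have : ((n + 1 : ℕ) : ℕ∞) + 1 ≤ (cyclicLatinSquareGraph n).chromaticNumber :=
    Order.add_one_le_of_lt h2
  calc (n + 2 : ℕ∞) = ((n + 1 : ℕ) : ℕ∞) + 1 := by push_cast; ring
    _ ≤ _ := this
end

section
/- Let n ≥ 2 be even. Define a coloring of cells (i,j) with 1 ≤ i,j ≤ n by c(i,j) = j - i mod (n+2) if i ≤ n/2, and c(i,j) = j - i - 1 mod (n+2) if i > n/2. Then c is a proper coloring of the cyclic Latin square graph of order n with n + 2 colors: whenever distinct cells (i,j) and (a,b) satisfy i = a, or j = b, or i + j ≡ a + b (mod n), we have c(i,j) ≠ c(a,b). -/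
set_option maxHeartbeats 1000000

/-- The `(n+2)`-coloring of the order-`n` cyclic Latin square: cells `(i,j)` with
`1 ≤ i,j ≤ n`, colored `j - i (mod n+2)` in the first half of rows and
`j - i - 1 (mod n+2)` in the second half. -/
def evenColoring (n : ℕ) (p : ℕ × ℕ) : ZMod (n + 2) :=
  if p.1 ≤ n / 2 then (p.2 : ZMod (n + 2)) - p.1 else (p.2 : ZMod (n + 2)) - p.1 - 1

theorem evenColoring_proper (n : ℕ) (hn : 2 ≤ n) (heven : Even n)
    (i j a b : ℕ) (hi : 1 ≤ i) (hi' : i ≤ n) (hj : 1 ≤ j) (hj' : j ≤ n)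
    (ha : 1 ≤ a) (ha' : a ≤ n) (hb : 1 ≤ b) (hb' : b ≤ n)
    (hne : (i, j) ≠ (a, b))
    (hadj : i = a ∨ j = b ∨ (i + j) % n = (a + b) % n) :
    evenColoring n (i, j) ≠ evenColoring n (a, b) := by
  intro h
  obtain ⟨m, hm⟩ := heven
  have hne' : ¬(i = a ∧ j = b) := fun ⟨h1, h2⟩ => hne (by rw [h1, h2])
  set e1 : ℤ := if i ≤ n / 2 then 0 else 1 with he1
  set e2 : ℤ := if a ≤ n / 2 then 0 else 1 with he2
  have he1' : (i ≤ n / 2 ∧ e1 = 0) ∨ (¬ i ≤ n / 2 ∧ e1 = 1) := by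
    rw [he1]; split_ifs with hc <;> simp [hc]
  have he2' : (a ≤ n / 2 ∧ e2 = 0) ∨ (¬ a ≤ n / 2 ∧ e2 = 1) := by
    rw [he2]; split_ifs with hc <;> simp [hc]
  have h' : ((((j:ℤ) - i - e1) - ((b:ℤ) - a - e2) : ℤ) : ZMod (n + 2)) = 0 := by
    simp only [evenColoring] at h
    rw [he1, he2]
    split_ifs at h ⊢ <;> push_cast <;> rw [sub_eq_zero] <;>
      linear_combination h
  have hd := (ZMod.intCast_zmod_eq_zero_iff_dvd _ _).mp h'
  push_cast at hd
  obtain ⟨k, hk⟩ := hd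
  have hi'z : (i:ℤ) ≤ n := by exact_mod_cast hi'
  have hj'z : (j:ℤ) ≤ n := by exact_mod_cast hj'
  have ha'z : (a:ℤ) ≤ n := by exact_mod_cast ha'
  have hb'z : (b:ℤ) ≤ n := by exact_mod_cast hb'
  have hiz : (1:ℤ) ≤ i := by exact_mod_cast hi
  have hjz : (1:ℤ) ≤ j := by exact_mod_cast hj
  have haz : (1:ℤ) ≤ a := by exact_mod_cast ha
  have hbz : (1:ℤ) ≤ b := by exact_mod_cast hb
  have hnz : (2:ℤ) ≤ n := by exact_mod_cast hn
  have he1b : 0 ≤ e1 ∧ e1 ≤ 1 := by rcases he1' with ⟨_, h⟩ | ⟨_, h⟩ <;> omega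
  have he2b : 0 ≤ e2 ∧ e2 ≤ 1 := by rcases he2' with ⟨_, h⟩ | ⟨_, h⟩ <;> omega
  have hk1 : k ≤ 1 := by nlinarith [hk, he1b.1, he2b.2]
  have hk2 : -1 ≤ k := by nlinarith [hk, he1b.2, he2b.1]
  clear h h' hne
  rcases hadj with h3 | h3 | h3
  · interval_cases k <;> omega
  · interval_cases k <;> omega
  · have hd2 := (show Nat.ModEq n (i+j) (a+b) from h3).dvd
    obtain ⟨t, ht⟩ := hd2
    push_cast at ht
    have ht1 : t ≤ 1 := by nlinarith [ht]
    have ht2 : -1 ≤ t := by nlinarith [ht]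
    interval_cases k <;> interval_cases t <;> omega
end

section
/- For even n ≥ 2, the chromatic number of the cyclic Latin square graph T_n equals n + 2. -/
lemma cyclic_adj_iff (n : ℕ) (x y : ZMod n × ZMod n) :
    (cyclicLatinSquareGraph n).Adj x y ↔
      x ≠ y ∧ (x.1 = y.1 ∨ x.2 = y.2 ∨ x.1 + x.2 = y.1 + y.2) := by
  simp only [cyclicLatinSquareGraph, SimpleGraph.fromRel_adj]
  constructor
  · rintro ⟨h, h2 | h2⟩ <;> exact ⟨h, by tauto⟩
  · tauto

lemma cyclic_color_proper (n k : ℕ) (hn : 2 ≤ n) (hk : n = 2 * k) :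
    ∀ x y : ZMod n × ZMod n, (cyclicLatinSquareGraph n).Adj x y →
      (((x.2.val : ℤ) - x.1.val - (if x.1.val < k then (0:ℤ) else 1) : ℤ) : ZMod (n+2)) ≠
      (((y.2.val : ℤ) - y.1.val - (if y.1.val < k then (0:ℤ) else 1) : ℤ) : ZMod (n+2)) := by
  haveI : NeZero n := ⟨by omega⟩
  intro x y hadj hc
  rw [cyclic_adj_iff] at hadj
  obtain ⟨hne, hcase⟩ := hadj
  set i := x.1.val with hidef
  set j := x.2.val with hjdef
  set a := y.1.val with hadef
  set b := y.2.val with hbdef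
  have hi : i < n := ZMod.val_lt _
  have hj : j < n := ZMod.val_lt _
  have ha : a < n := ZMod.val_lt _
  have hb : b < n := ZMod.val_lt _
  rw [ZMod.intCast_eq_intCast_iff] at hc
  have hdvd : ((n:ℤ)+2) ∣ (((b : ℤ) - a - (if a < k then (0:ℤ) else 1)) -
      ((j : ℤ) - i - (if i < k then (0:ℤ) else 1))) := by
    simpa using hc.dvd
  obtain ⟨t, ht⟩ := hdvd
  have hpos : (0:ℤ) < (n:ℤ) + 2 := by positivity
  have hne' : ¬(i = a ∧ j = b) := by
    rintro ⟨h1, h2⟩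
    exact hne (Prod.ext (ZMod.val_injective n h1) (ZMod.val_injective n h2))
  have ht2 : t ≤ 1 := by
    by_contra h
    push_neg at h
    have : 2 * ((n:ℤ)+2) ≤ ((n:ℤ)+2) * t := by nlinarith
    split_ifs at ht <;> omega
  have ht3 : -1 ≤ t := by
    by_contra h
    push_neg at h
    have : ((n:ℤ)+2) * t ≤ -2 * ((n:ℤ)+2) := by nlinarith
    split_ifs at ht <;> omega
  rcases hcase with h | h | h
  · have hia : i = a := congrArg ZMod.val h
    interval_cases t <;> split_ifs at ht <;> omega
  · have hjb : j = b := congrArg ZMod.val h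
    interval_cases t <;> split_ifs at ht <;> omega
  · have e1 : ((i:ℕ) : ZMod n) = x.1 := by rw [hidef, ZMod.natCast_val, ZMod.cast_id]
    have e2 : ((j:ℕ) : ZMod n) = x.2 := by rw [hjdef, ZMod.natCast_val, ZMod.cast_id]
    have e3 : ((a:ℕ) : ZMod n) = y.1 := by rw [hadef, ZMod.natCast_val, ZMod.cast_id]
    have e4 : ((b:ℕ) : ZMod n) = y.2 := by rw [hbdef, ZMod.natCast_val, ZMod.cast_id]
    have hd : ((i + j : ℤ) : ZMod n) = ((a + b : ℤ) : ZMod n) := by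
      push_cast
      rw [e1, e2, e3, e4]
      exact h
    rw [ZMod.intCast_eq_intCast_iff] at hd
    obtain ⟨s, hs⟩ := hd.symm.dvd
    have hs2 : s ≤ 1 := by nlinarith
    have hs3 : -1 ≤ s := by nlinarith
    interval_cases s <;> interval_cases t <;> split_ifs at ht <;> omega

lemma zmod_sum_even (n k : ℕ) [NeZero n] (hk : n = 2 * k) (hk1 : 1 ≤ k) :
    ∑ z : ZMod n, z = (k : ZMod n) := by
  have hn1 : 1 ≤ n := by omega
  have hkz : (n:ℤ) = 2 * k := by exact_mod_cast congrArg (Nat.cast : ℕ → ℤ) hk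
  have h1 : ∑ z : ZMod n, z = ∑ m ∈ Finset.range n, ((m : ℕ) : ZMod n) := by
    refine Finset.sum_nbij' (fun z => z.val) (fun m => ((m : ℕ) : ZMod n)) ?_ ?_ ?_ ?_ ?_
    · intro z _; exact Finset.mem_range.2 (ZMod.val_lt z)
    · intro m _; exact Finset.mem_univ _
    · intro z _; exact ZMod.natCast_rightInverse z
    · intro m hm; exact ZMod.val_cast_of_lt (Finset.mem_range.1 hm)
    · intro z _; exact (ZMod.natCast_rightInverse z).symm
  rw [h1, ← Nat.cast_sum]
  have h2 : ∑ m ∈ Finset.range n, m = k * (n - 1) := by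
    have h := Finset.sum_range_id_mul_two n
    have e : n * (n - 1) = 2 * (k * (n - 1)) := by
      zify [hn1]; rw [hkz]; ring
    omega
  rw [h2, ZMod.natCast_eq_natCast_iff]
  have hle : k ≤ k * (n - 1) := Nat.le_mul_of_pos_right k (by omega)
  rw [Nat.ModEq.comm, Nat.modEq_iff_dvd' hle]
  refine ⟨k - 1, ?_⟩
  zify [hle, hk1, hn1]
  rw [hkz]; ring

lemma cyclic_not_colorable (n k : ℕ) (hn : 2 ≤ n) (hk : n = 2 * k) :
    ¬ (cyclicLatinSquareGraph n).Colorable (n + 1) := by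
  haveI : NeZero n := ⟨by omega⟩
  classical
  rintro ⟨C⟩
  set S : Fin (n+1) → Finset (ZMod n × ZMod n) :=
    fun c => Finset.univ.filter (fun x => C x = c) with hS
  have hindep : ∀ (c : Fin (n+1)), ∀ x ∈ S c, ∀ y ∈ S c, x ≠ y →
      x.1 ≠ y.1 ∧ x.2 ≠ y.2 ∧ x.1 + x.2 ≠ y.1 + y.2 := by
    intro c x hx y hy hxy
    simp only [hS, Finset.mem_filter, Finset.mem_univ, true_and] at hx hy
    have hcx : C x = C y := by rw [hx, hy]
    have hna : ¬ (cyclicLatinSquareGraph n).Adj x y := fun h => C.valid h hcx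
    rw [cyclic_adj_iff] at hna
    push_neg at hna
    exact hna hxy
  have hcard_le : ∀ c, (S c).card ≤ n := by
    intro c
    have h := Finset.card_le_card_of_injOn Prod.fst
      (fun x (_ : x ∈ S c) => Finset.mem_univ x.1)
      (by
        intro x hx y hy hf
        by_contra hxy
        exact (hindep c x (Finset.mem_coe.1 hx) y (Finset.mem_coe.1 hy) hxy).1 hf)
    simpa [ZMod.card] using h
  have hsum_eq : ∀ c (f : ZMod n × ZMod n → ZMod n), Set.InjOn f (S c) → (S c).card = n →
      ∑ x ∈ S c, f x = ∑ z : ZMod n, z := by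
    intro c f hinj hc
    have himg : (S c).image f = Finset.univ := by
      apply Finset.eq_univ_of_card
      rw [Finset.card_image_of_injOn hinj, hc, ZMod.card]
    have hsi := Finset.sum_image (s := S c) (g := f) (f := fun z : ZMod n => z)
      (fun x hx y hy h => hinj (Finset.mem_coe.2 hx) (Finset.mem_coe.2 hy) h)
    rw [himg] at hsi
    exact hsi.symm
  have hk1 : 1 ≤ k := by omega
  have hcard_ne : ∀ c, (S c).card ≠ n := by
    intro c hc
    have hinj1 : Set.InjOn (Prod.fst : ZMod n × ZMod n → ZMod n) (S c) := by
      intro x hx y hy hf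
      by_contra hxy; exact (hindep c x (Finset.mem_coe.1 hx) y (Finset.mem_coe.1 hy) hxy).1 hf
    have hinj2 : Set.InjOn (Prod.snd : ZMod n × ZMod n → ZMod n) (S c) := by
      intro x hx y hy hf
      by_contra hxy; exact (hindep c x (Finset.mem_coe.1 hx) y (Finset.mem_coe.1 hy) hxy).2.1 hf
    have hinj3 : Set.InjOn (fun x : ZMod n × ZMod n => x.1 + x.2) (S c) := by
      intro x hx y hy hf
      by_contra hxy; exact (hindep c x (Finset.mem_coe.1 hx) y (Finset.mem_coe.1 hy) hxy).2.2 hf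
    have e1 := hsum_eq c Prod.fst hinj1 hc
    have e2 := hsum_eq c Prod.snd hinj2 hc
    have e3 := hsum_eq c (fun x => x.1 + x.2) hinj3 hc
    have hsplit : ∑ x ∈ S c, (x.1 + x.2) = (∑ x ∈ S c, x.1) + ∑ x ∈ S c, x.2 :=
      Finset.sum_add_distrib
    rw [zmod_sum_even n k hk hk1] at e1 e2 e3
    rw [e3] at hsplit
    rw [e1, e2] at hsplit
    have hzero : (k : ZMod n) = 0 := right_eq_add.mp hsplit
    rw [ZMod.natCast_eq_zero_iff] at hzero
    have := Nat.le_of_dvd (by omega) hzero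
    omega
  have htotal : ∑ c : Fin (n+1), (S c).card = n * n := by
    have h := Finset.card_eq_sum_card_fiberwise
      (f := C) (s := Finset.univ) (t := Finset.univ) (fun x _ => Finset.mem_univ (C x))
    rw [Finset.card_univ, Fintype.card_prod, ZMod.card] at h
    exact h.symm
  have hle1 : ∀ c : Fin (n+1), (S c).card ≤ n - 1 := fun c => by
    have h1 := hcard_le c; have h2 := hcard_ne c; omega
  have hfin : n * n ≤ (n+1) * (n-1) := by
    rw [← htotal]
    calc ∑ c : Fin (n+1), (S c).card ≤ ∑ _c : Fin (n+1), (n-1) :=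
          Finset.sum_le_sum (fun c _ => hle1 c)
      _ = (n+1) * (n-1) := by
          rw [Finset.sum_const, Finset.card_univ, Fintype.card_fin, smul_eq_mul]
  obtain ⟨m, rfl⟩ : ∃ m, n = m + 1 := ⟨n - 1, by omega⟩
  rw [Nat.add_sub_cancel] at hfin
  nlinarith

theorem cyclic_chromaticNumber_even (n : ℕ) (hn : 2 ≤ n) (heven : Even n) :
    (cyclicLatinSquareGraph n).chromaticNumber = n + 2 := by
  obtain ⟨k, hk⟩ := heven
  have hk' : n = 2 * k := by omega
  haveI : NeZero n := ⟨by omega⟩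
  -- upper bound
  have hub : (cyclicLatinSquareGraph n).Colorable (n + 2) := by
    have C : (cyclicLatinSquareGraph n).Coloring (ZMod (n+2)) :=
      SimpleGraph.Coloring.mk
        (fun x => (((x.2.val : ℤ) - x.1.val - (if x.1.val < k then (0:ℤ) else 1) : ℤ) : ZMod (n+2)))
        (fun hadj => cyclic_color_proper n k hn hk' _ _ hadj)
    have h := C.colorable
    rwa [ZMod.card] at h
  have hlb := cyclic_not_colorable n k hn hk'
  apply le_antisymm
  · have := hub.chromaticNumber_le
    exact_mod_cast this
  · by_contra h
    push_neg at h
    have h2 : (cyclicLatinSquareGraph n).chromaticNumber ≤ (n + 1 : ℕ) := by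
      have : ((n:ℕ∞) + 2) = ((n + 1 : ℕ) : ℕ∞) + 1 := by push_cast; ring
      rw [this] at h
      exact Order.le_of_lt_add_one h
    rw [SimpleGraph.chromaticNumber_le_iff_colorable] at h2
    exact hlb h2
end

section
/- Let n ≥ 2 be even and fix a color C ∈ ZMod (n+2). Under the coloring c(i,j) = j - i mod (n+2) for 1 ≤ i ≤ n/2 (and c(i,j) = j - i - 1 mod (n+2) for n/2 < i ≤ n), all cells (i,j) with 1 ≤ i ≤ n/2, 1 ≤ j ≤ n, and c(i,j) = C have labels i + j mod n of the same parity. -/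
theorem firstHalf_sameColor_sameParity (n : ℕ) (hn : 2 ≤ n) (heven : Even n)
    (C : ZMod (n + 2)) (i j a b : ℕ)
    (hi : 1 ≤ i) (hi' : i ≤ n / 2) (hj : 1 ≤ j) (hj' : j ≤ n)
    (ha : 1 ≤ a) (ha' : a ≤ n / 2) (hb : 1 ≤ b) (hb' : b ≤ n)
    (hc1 : (j : ZMod (n + 2)) - i = C) (hc2 : (b : ZMod (n + 2)) - a = C) :
    (i + j) % n % 2 = (a + b) % n % 2 := by
  obtain ⟨m, hm⟩ := heven
  have h2n : 2 ∣ n := ⟨m, by omega⟩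
  rw [Nat.mod_mod_of_dvd _ h2n, Nat.mod_mod_of_dvd _ h2n]
  have h : ((((j : ℤ) - i - ((b : ℤ) - a) : ℤ) : ZMod (n + 2))) = 0 := by
    push_cast
    rw [hc1, hc2]; ring
  have hdvd := (ZMod.intCast_zmod_eq_zero_iff_dvd _ (n + 2)).mp h
  obtain ⟨k, hk⟩ : (2 : ℤ) ∣ ((j : ℤ) - i - ((b : ℤ) - a)) := by
    obtain ⟨k, hk⟩ := hdvd
    exact ⟨((m : ℤ) + 1) * k, by rw [hk]; push_cast [hm]; ring⟩
  omega
end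

section
/- Let n ≥ 2 be even and fix a color C ∈ ZMod (n+2). Under the coloring c(i,j) = j - i mod (n+2) for i ≤ n/2 and c(i,j) = j - i - 1 mod (n+2) for i > n/2, if a cell in the first half of rows (i ≤ n/2) and a cell in the second half (i > n/2) both have color C, then the parities of their labels i + j mod n are opposite; in particular their labels differ. -/
theorem halves_sameColor_oppositeParity (n : ℕ) (hn : 2 ≤ n) (heven : Even n)
    (C : ZMod (n + 2)) (i j a b : ℕ)
    (hi : 1 ≤ i) (hi' : i ≤ n / 2) (hj : 1 ≤ j) (hj' : j ≤ n)
    (ha : n / 2 < a) (ha' : a ≤ n) (hb : 1 ≤ b) (hb' : b ≤ n)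
    (hc1 : (j : ZMod (n + 2)) - i = C) (hc2 : (b : ZMod (n + 2)) - a - 1 = C) :
    (i + j) % n % 2 ≠ (a + b) % n % 2 ∧ (i + j) % n ≠ (a + b) % n := by
  obtain ⟨k, hk⟩ := heven
  have h2 : (2 : ℕ) ∣ n + 2 := ⟨k + 1, by omega⟩
  have h := hc1.trans hc2.symm
  have h' := congrArg (ZMod.castHom h2 (ZMod 2)) h
  simp only [map_sub, map_one, map_natCast] at h'
  have htwo : (2 : ZMod 2) = 0 := by decide
  have key : ((i + j : ℕ) : ZMod 2) = ((a + b : ℕ) : ZMod 2) + 1 := by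
    push_cast
    linear_combination h' + ((i : ZMod 2) - a - 1) * htwo
  have hdn : (2 : ℕ) ∣ n := ⟨k, by omega⟩
  have hpar : (i + j) % 2 ≠ (a + b) % 2 := by
    intro hEq
    have hcast : ((i + j : ℕ) : ZMod 2) = ((a + b : ℕ) : ZMod 2) :=
      (ZMod.natCast_eq_natCast_iff _ _ 2).2 hEq
    rw [hcast] at key
    exact one_ne_zero (left_eq_add.mp key)
  constructor
  · rwa [Nat.mod_mod_of_dvd _ hdn, Nat.mod_mod_of_dvd _ hdn]
  · intro hEq
    exact hpar (by rw [← Nat.mod_mod_of_dvd _ hdn, hEq, Nat.mod_mod_of_dvd _ hdn])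
end

section
/- Let n ≥ 2 be even and fix a color C ∈ ZMod (n+2). Under the coloring c(i,j) = j - i mod (n+2) restricted to cells with 1 ≤ i ≤ n/2 and 1 ≤ j ≤ n, any two distinct cells of color C have distinct labels i + j mod n. -/
theorem firstHalf_sameColor_distinct_labels (n : ℕ) (hn : 2 ≤ n) (heven : Even n)
    (C : ZMod (n + 2)) (i j a b : ℕ)
    (hi : 1 ≤ i) (hi' : i ≤ n / 2) (hj : 1 ≤ j) (hj' : j ≤ n)
    (ha : 1 ≤ a) (ha' : a ≤ n / 2) (hb : 1 ≤ b) (hb' : b ≤ n)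
    (hne : (i, j) ≠ (a, b))
    (hc1 : (j : ZMod (n + 2)) - i = C) (hc2 : (b : ZMod (n + 2)) - a = C) :
    (i + j) % n ≠ (a + b) % n := by
  intro h
  -- divisibility from colors
  have hcol : ((( (j:ℤ) - i - b + a ) : ℤ) : ZMod (n + 2)) = 0 := by
    push_cast
    rw [show ((j:ZMod (n+2)) - i - b + a) = ((j:ZMod (n+2)) - i) - ((b:ZMod (n+2)) - a) by ring,
      hc1, hc2, sub_self]
  have hd : ((n : ℤ) + 2) ∣ ((j:ℤ) - i - b + a) := by
    have := (ZMod.intCast_zmod_eq_zero_iff_dvd _ (n+2)).mp hcol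
    exact_mod_cast this
  obtain ⟨k, hk⟩ := hd
  -- divisibility from labels
  have hlab : (n : ℤ) ∣ ((a:ℤ) + b - i - j) := by
    have : (i + j) ≡ (a + b) [MOD n] := h
    have := (Nat.modEq_iff_dvd).mp this
    convert this using 1
    push_cast
    ring
  obtain ⟨m, hm⟩ := hlab
  have h2i : 2 * i ≤ n := by omega
  have h2a : 2 * a ≤ n := by omega
  -- bound k
  have hkb : k = -1 ∨ k = 0 ∨ k = 1 := by
    have hub : ((n:ℤ) + 2) * k < ((n:ℤ) + 2) * 2 := by rw [← hk]; omega
    have hlb : ((n:ℤ) + 2) * (-2) < ((n:ℤ) + 2) * k := by rw [← hk]; omega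
    have hpos : (0:ℤ) < (n:ℤ) + 2 := by positivity
    have := (mul_lt_mul_iff_right₀ hpos).mp hub
    have := (mul_lt_mul_iff_right₀ hpos).mp hlb
    omega
  have hmb : m = -1 ∨ m = 0 ∨ m = 1 := by
    have hub : (n:ℤ) * m < (n:ℤ) * 2 := by rw [← hm]; omega
    have hlb : (n:ℤ) * (-2) < (n:ℤ) * m := by rw [← hm]; omega
    have hpos : (0:ℤ) < (n:ℤ) := by positivity
    have := (mul_lt_mul_iff_right₀ hpos).mp hub
    have := (mul_lt_mul_iff_right₀ hpos).mp hlb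
    omega
  have hne' : i ≠ a ∨ j ≠ b := by
    by_contra hq
    push_neg at hq
    exact hne (Prod.ext hq.1 hq.2)
  rcases hkb with rfl | rfl | rfl <;> rcases hmb with rfl | rfl | rfl <;>
    simp only [mul_neg_one, mul_zero, mul_one] at hk hm <;> omega
end

section
/- Let n ≥ 2 be even and fix a color C ∈ ZMod (n+2). Under the coloring c(i,j) = j - i - 1 mod (n+2) restricted to cells with n/2 < i ≤ n and 1 ≤ j ≤ n, any two distinct cells of color C have distinct labels i + j mod n. -/
lemma small_mult_aux {m D : ℤ} (hm : 0 < m) (hd : m ∣ D) (h1 : -(2*m) < D) (h2 : D < 2*m) :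
    D = -m ∨ D = 0 ∨ D = m := by
  obtain ⟨k, rfl⟩ := hd
  have hk1 : -2 < k := by nlinarith
  have hk2 : k < 2 := by nlinarith
  interval_cases k <;> omega

theorem secondHalf_sameColor_distinct_labels (n : ℕ) (hn : 2 ≤ n) (heven : Even n)
    (C : ZMod (n + 2)) (i j a b : ℕ)
    (hi : n / 2 < i) (hi' : i ≤ n) (hj : 1 ≤ j) (hj' : j ≤ n)
    (ha : n / 2 < a) (ha' : a ≤ n) (hb : 1 ≤ b) (hb' : b ≤ n)
    (hne : (i, j) ≠ (a, b))
    (hc1 : (j : ZMod (n + 2)) - i - 1 = C) (hc2 : (b : ZMod (n + 2)) - a - 1 = C) :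
    (i + j) % n ≠ (a + b) % n := by
  intro hmod
  obtain ⟨m, rfl⟩ := heven
  have h2 : ((m + m : ℕ) + 2 : ℤ) ∣ ((j:ℤ) - i - ((b:ℤ) - a)) := by
    have hz := (ZMod.intCast_zmod_eq_zero_iff_dvd ((j:ℤ) - i - ((b:ℤ) - a)) (m + m + 2)).mp
      (by push_cast
          rw [show ((j:ZMod (m + m + 2)) - i - ((b:ZMod (m + m + 2)) - a))
            = ((j:ZMod (m + m + 2)) - i - 1) - ((b:ZMod (m + m + 2)) - a - 1) by ring, hc1, hc2,
            sub_self])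
    exact_mod_cast hz
  have h1 : ((m + m : ℕ) : ℤ) ∣ ((a:ℤ) + b - ((i:ℤ) + j)) := by
    have hmeq : (i + j) ≡ (a + b) [MOD (m + m)] := hmod
    exact_mod_cast hmeq.dvd
  have hne' : ¬(i = a ∧ j = b) := by simpa [Prod.ext_iff] using hne
  rw [not_and_or] at hne'
  have d2 := small_mult_aux (m := ((m + m : ℕ) + 2 : ℤ)) (by positivity) h2 (by push_cast; omega)
    (by push_cast; omega)
  have d1 := small_mult_aux (m := ((m + m : ℕ) : ℤ)) (by exact_mod_cast (by omega : 0 < m + m))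
    h1 (by push_cast; omega) (by push_cast; omega)
  push_cast at d1 d2
  omega
end

section
/- Let n ≥ 2 be even. In the (n+2)-coloring of the n × n cyclic Latin square graph given by c(i,j) = j - i mod (n+2) for i ≤ n/2 and c(i,j) = j - i - 1 mod (n+2) for i > n/2, each color class has size either n - 1 or n - 2; in particular the coloring is equitable (any two color classes differ in size by at most 1). -/
/-- The color class of a color `C`. -/
def colorClass (n : ℕ) (C : ZMod (n + 2)) : Finset (ℕ × ℕ) :=
  ((Finset.Icc 1 n) ×ˢ (Finset.Icc 1 n)).filter (fun p => evenColoring n p = C)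

private lemma colorClass_card (n : ℕ) (hn : 2 ≤ n) (heven : Even n) (C : ZMod (n + 2)) :
    (colorClass n C).card = n - 1 ∨ (colorClass n C).card = n - 2 := by
  haveI : NeZero (n + 2) := ⟨by omega⟩
  obtain ⟨m, hm⟩ := heven
  have hm2 : n / 2 = m := by omega
  have hm1 : 1 ≤ m := by omega
  set σ : ℕ → ℕ := fun i => if i ≤ n / 2 then (C + (i : ZMod (n + 2))).val
      else (C + (i : ZMod (n + 2)) + 1).val with hσ
  -- the color class is the image of a set of rows
  have himg : colorClass n C =
      ((Finset.Icc 1 n).filter (fun i => σ i ∈ Finset.Icc 1 n)).image (fun i => (i, σ i)) := by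
    ext ⟨i, j⟩
    simp only [colorClass, Finset.mem_filter]
    simp only [colorClass, Finset.mem_filter, Finset.mem_product, Finset.mem_Icc,
      Finset.mem_image, evenColoring]
    constructor
    · rintro ⟨⟨⟨hi1, hi2⟩, hj1, hj2⟩, hc⟩
      have hji : σ i = j := by
        by_cases h : i ≤ n / 2
        · simp only [hσ, if_pos h]
          simp only [if_pos h] at hc
          have h2 : C + (i : ZMod (n + 2)) = (j : ZMod (n + 2)) := by
            rw [← hc]; ring
          rw [h2, ZMod.val_cast_of_lt (by omega : j < n + 2)]
        · simp only [hσ, if_neg h]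
          simp only [if_neg h] at hc
          have h2 : C + (i : ZMod (n + 2)) + 1 = (j : ZMod (n + 2)) := by
            rw [← hc]; ring
          rw [h2, ZMod.val_cast_of_lt (by omega : j < n + 2)]
      exact ⟨i, ⟨⟨hi1, hi2⟩, by rw [hji]; exact ⟨hj1, hj2⟩⟩, by rw [hji]⟩
    · rintro ⟨i', ⟨hi', hσi'⟩, heq⟩
      obtain ⟨rfl, rfl⟩ : i' = i ∧ σ i' = j := by
        constructor
        · exact congrArg Prod.fst heq
        · exact congrArg Prod.snd heq
      refine ⟨⟨hi', hσi'⟩, ?_⟩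
      by_cases h : i' ≤ n / 2
      · simp only [if_pos h]
        simp only [hσ, if_pos h]
        rw [ZMod.natCast_rightInverse (C + (i' : ZMod (n + 2)))]
        ring
      · simp only [if_neg h]
        simp only [hσ, if_neg h]
        rw [ZMod.natCast_rightInverse (C + (i' : ZMod (n + 2)) + 1)]
        ring
  have hcard : (colorClass n C).card
      = ((Finset.Icc 1 n).filter (fun i => σ i ∈ Finset.Icc 1 n)).card := by
    rw [himg]
    exact Finset.card_image_of_injOn (fun x _ y _ h => congrArg Prod.fst h)
  have hsum := Finset.card_filter_add_card_filter_not
    (s := Finset.Icc 1 n) (p := fun i => σ i ∈ Finset.Icc 1 n)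
  rw [Nat.card_Icc] at hsum
  set a := (-C).val with hadef
  have ha : a < n + 2 := ZMod.val_lt _
  have haC : ((a : ℕ) : ZMod (n + 2)) = -C := ZMod.natCast_rightInverse (-C)
  set b := (n + 1 + a) % (n + 2) with hbdef
  have hb : b < n + 2 := Nat.mod_lt _ (by omega)
  -- key value computation
  have hval : ∀ (x : ZMod (n + 2)) (t : ℕ), t < n + 2 → (x.val = t ↔ x = (t : ZMod (n + 2))) := by
    intro x t ht
    constructor
    · intro h
      rw [← h]
      exact (ZMod.natCast_rightInverse x).symm
    · intro h
      rw [h]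
      exact ZMod.val_cast_of_lt ht
  have hcast : ∀ i t : ℕ, i < n + 2 →
      (((i : ZMod (n + 2)) = (t : ZMod (n + 2))) ↔ i = t % (n + 2)) := by
    intro i t hi
    constructor
    · intro h
      have := congrArg ZMod.val h
      rwa [ZMod.val_natCast, ZMod.val_natCast, Nat.mod_eq_of_lt hi] at this
    · intro h
      rw [h, ZMod.natCast_mod]
  have hkey : ∀ i : ℕ, i < n + 2 → ∀ t : ℕ, t < n + 2 →
      ((C + (i : ZMod (n + 2))).val = t ↔ i = (t + a) % (n + 2)) := by
    intro i hi t ht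
    rw [hval _ t ht, ← hcast i (t + a) hi]
    have h2 : ((t + a : ℕ) : ZMod (n + 2)) = (t : ZMod (n + 2)) - C := by
      push_cast [haC]; ring
    rw [h2]
    constructor <;> intro h <;> linear_combination h
  -- characterization of the bad rows
  have hBchar : ∀ i, i ∈ Finset.Icc 1 n → (¬ (σ i ∈ Finset.Icc 1 n) ↔
      ((i ≤ n / 2 ∧ (i = a ∨ i = b)) ∨ (n / 2 < i ∧ (i + 1 = a ∨ i + 1 = b)))) := by
    intro i hi
    rw [Finset.mem_Icc] at hi
    have hiN : i < n + 2 := by omega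
    have hamod : (0 + a) % (n + 2) = a := by
      rw [Nat.zero_add, Nat.mod_eq_of_lt ha]
    by_cases h : i ≤ n / 2
    · simp only [hσ, if_pos h, Finset.mem_Icc]
      have hv : (C + (i : ZMod (n + 2))).val < n + 2 := ZMod.val_lt _
      have e0 : (C + (i : ZMod (n + 2))).val = 0 ↔ i = a := by
        rw [hkey i hiN 0 (by omega), hamod]
      have e1 : (C + (i : ZMod (n + 2))).val = n + 1 ↔ i = b := by
        rw [hkey i hiN (n + 1) (by omega)]
      constructor
      · intro hno
        refine Or.inl ⟨h, ?_⟩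
        rcases (by omega : (C + (i : ZMod (n + 2))).val = 0
            ∨ (C + (i : ZMod (n + 2))).val = n + 1) with h' | h'
        exacts [Or.inl (e0.mp h'), Or.inr (e1.mp h')]
      · rintro (⟨-, h' | h'⟩ | ⟨hgt, -⟩)
        · have := e0.mpr h'; omega
        · have := e1.mpr h'; omega
        · omega
    · simp only [hσ, if_neg h, Finset.mem_Icc]
      have hcongr : C + (i : ZMod (n + 2)) + 1 = C + ((i + 1 : ℕ) : ZMod (n + 2)) := by
        push_cast; ring
      rw [hcongr]
      have hv : (C + ((i + 1 : ℕ) : ZMod (n + 2))).val < n + 2 := ZMod.val_lt _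
      have e0 : (C + ((i + 1 : ℕ) : ZMod (n + 2))).val = 0 ↔ i + 1 = a := by
        rw [hkey (i + 1) (by omega) 0 (by omega), hamod]
      have e1 : (C + ((i + 1 : ℕ) : ZMod (n + 2))).val = n + 1 ↔ i + 1 = b := by
        rw [hkey (i + 1) (by omega) (n + 1) (by omega)]
      constructor
      · intro hno
        refine Or.inr ⟨by omega, ?_⟩
        rcases (by omega : (C + ((i + 1 : ℕ) : ZMod (n + 2))).val = 0
            ∨ (C + ((i + 1 : ℕ) : ZMod (n + 2))).val = n + 1) with h' | h'
        exacts [Or.inl (e0.mp h'), Or.inr (e1.mp h')]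
      · rintro (⟨hle, -⟩ | ⟨-, h' | h'⟩)
        · omega
        · have := e0.mpr h'; omega
        · have := e1.mpr h'; omega
  set B := (Finset.Icc 1 n).filter (fun i => ¬ (σ i ∈ Finset.Icc 1 n)) with hBdef
  -- bound the bad set
  have hB12 : 1 ≤ B.card ∧ B.card ≤ 2 := by
    have hmem : ∀ i, i ∈ B ↔ (1 ≤ i ∧ i ≤ n) ∧
        ((i ≤ n / 2 ∧ (i = a ∨ i = b)) ∨ (n / 2 < i ∧ (i + 1 = a ∨ i + 1 = b))) := by
      intro i
      rw [hBdef, Finset.mem_filter, Finset.mem_Icc]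
      constructor
      · rintro ⟨h1, h2⟩
        exact ⟨h1, (hBchar i (Finset.mem_Icc.mpr h1)).mp h2⟩
      · rintro ⟨h1, h2⟩
        exact ⟨h1, (hBchar i (Finset.mem_Icc.mpr h1)).mpr h2⟩
    by_cases ha0 : a = 0
    · -- b = n+1, B = {n}
      have hbv : b = n + 1 := by
        rw [hbdef, ha0, Nat.add_zero, Nat.mod_eq_of_lt (by omega)]
      have hsub : B ⊆ {n} := by
        intro i hiB
        rw [hmem] at hiB
        rw [Finset.mem_singleton]
        omega
      have hne : n ∈ B := by
        rw [hmem]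
        refine ⟨⟨by omega, le_rfl⟩, Or.inr ⟨by omega, Or.inr (by omega)⟩⟩
      constructor
      · exact Finset.card_pos.mpr ⟨n, hne⟩
      · calc B.card ≤ ({n} : Finset ℕ).card := Finset.card_le_card hsub
          _ ≤ 2 := by simp
    · have ha1 : 1 ≤ a := by omega
      have hbv : b = a - 1 := by
        rw [hbdef]
        have : n + 1 + a = (a - 1) + (n + 2) := by omega
        rw [this, Nat.add_mod_right, Nat.mod_eq_of_lt (by omega)]
      by_cases ham : a ≤ n / 2
      · have hsub : B ⊆ {a, a - 1} := by
          intro i hiB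
          rw [hmem] at hiB
          simp only [Finset.mem_insert, Finset.mem_singleton]
          omega
        have hne : a ∈ B := by
          rw [hmem]
          exact ⟨⟨ha1, by omega⟩, Or.inl ⟨ham, Or.inl rfl⟩⟩
        constructor
        · exact Finset.card_pos.mpr ⟨a, hne⟩
        · calc B.card ≤ ({a, a - 1} : Finset ℕ).card := Finset.card_le_card hsub
            _ ≤ 2 := by
              apply le_trans (Finset.card_insert_le _ _); simp
      · have hsub : B ⊆ {a - 1, a - 2} := by
          intro i hiB
          rw [hmem] at hiB
          simp only [Finset.mem_insert, Finset.mem_singleton]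
          omega
        have hne : a - 1 ∈ B := by
          rw [hmem]
          refine ⟨⟨by omega, by omega⟩, ?_⟩
          by_cases h : a - 1 ≤ n / 2
          · exact Or.inl ⟨h, Or.inr (by omega)⟩
          · exact Or.inr ⟨by omega, Or.inl (by omega)⟩
        constructor
        · exact Finset.card_pos.mpr ⟨a - 1, hne⟩
        · calc B.card ≤ ({a - 1, a - 2} : Finset ℕ).card := Finset.card_le_card hsub
            _ ≤ 2 := by
              apply le_trans (Finset.card_insert_le _ _); simp
  omega

theorem evenColoring_equitable (n : ℕ) (hn : 2 ≤ n) (heven : Even n) :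
    (∀ C : ZMod (n + 2), (colorClass n C).card = n - 1 ∨ (colorClass n C).card = n - 2) ∧
      ∀ C D : ZMod (n + 2), (colorClass n C).card ≤ (colorClass n D).card + 1 := by
  refine ⟨fun C => colorClass_card n hn heven C, fun C D => ?_⟩
  rcases colorClass_card n hn heven C with h1 | h1 <;>
    rcases colorClass_card n hn heven D with h2 | h2 <;> omega
end
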